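/- Existence of the matched piecewise-cubic barrier profile: let 0 < c ≤ C. There exist unique α_± > 0 solving 4Cα_−² = c α_+² and (c/6)α_+³ + (2C/3)α_−³ = 1, such that for every β > 0, setting η_± = α_± β^{1/3}, A_− = C/3, A_+ = c/12, B_− = −2η_− A_−, B_+ = 2η_+ A_+, the function v(z) = (z+η_−)²(A_− z + B_−) + β/2 for −η_− ≤ z ≤ 0 and v(z) = (z−η_+)²(A_+ z + B_+) − β/2 for 0 ≤ z ≤ η_+ is C^{1,1} on [−η_−, η_+] (i.e. v, v' continuous and v'' bounded, with matching at 0 and at ±η_±), satisfies v(−η_−) = β/2, v(η_+) = −β/2, v'(−η_−) = v'(η_+) = 0, and v''(z) = 2Cz for z < 0, v''(z) = (c/2)z for z > 0. -/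

import Mathlib

lemma glue_hasDerivAt (P Q dP dQ : ℝ → ℝ)
    (hP : ∀ z, HasDerivAt P (dP z) z) (hQ : ∀ z, HasDerivAt Q (dQ z) z)
    (h0 : P 0 = Q 0) (h0' : dP 0 = dQ 0) (z : ℝ) :
    HasDerivAt (fun z => if z ≤ 0 then P z else Q z)
      (if z ≤ 0 then dP z else dQ z) z := by
  rcases lt_trichotomy z 0 with hz | rfl | hz
  · rw [if_pos hz.le]
    apply (hP z).congr_of_eventuallyEq
    filter_upwards [Iio_mem_nhds hz] with y hy
    rw [if_pos (le_of_lt hy)]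
  · rw [if_pos le_rfl]
    have hle : HasDerivWithinAt (fun z => if z ≤ 0 then P z else Q z) (dP 0) (Set.Iic 0) 0 := by
      apply (hP 0).hasDerivWithinAt.congr
      · intro y hy; rw [if_pos (Set.mem_Iic.mp hy)]
      · rw [if_pos le_rfl]
    have hgt : HasDerivWithinAt (fun z => if z ≤ 0 then P z else Q z) (dP 0) (Set.Ioi 0) 0 := by
      rw [h0']
      apply (hQ 0).hasDerivWithinAt.congr
      · intro y hy; rw [if_neg (not_le.mpr hy)]
      · rw [if_pos le_rfl, h0]
    have h := hle.union hgt
    rw [Set.Iic_union_Ioi] at h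
    exact hasDerivWithinAt_univ.mp h
  · rw [if_neg (not_le.mpr hz)]
    apply (hQ z).congr_of_eventuallyEq
    filter_upwards [Ioi_mem_nhds hz] with y hy
    rw [if_neg (not_le.mpr hy)]

lemma barrier_aux (c C β ηm ηp Am Ap Bm Bp : ℝ) (hc : 0 < c) (hC : 0 < C) (hcC : c ≤ C)
    (hβ : 0 < β) (hηm : 0 < ηm) (hηp : 0 < ηp)
    (hAm : Am = C / 3) (hAp : Ap = c / 12)
    (hBm : Bm = -(2 * ηm * Am)) (hBp : Bp = 2 * ηp * Ap)
    (hmatch : c / 6 * ηp ^ 3 + 2 * C / 3 * ηm ^ 3 = β)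
    (hmatch' : 4 * C * ηm ^ 2 = c * ηp ^ 2) :
    let v : ℝ → ℝ := fun z =>
      if z ≤ 0 then (z + ηm) ^ 2 * (Am * z + Bm) + β / 2
      else (z - ηp) ^ 2 * (Ap * z + Bp) - β / 2
    let v' : ℝ → ℝ := fun z =>
      if z ≤ 0 then 2 * (z + ηm) * (Am * z + Bm) + (z + ηm) ^ 2 * Am
      else 2 * (z - ηp) * (Ap * z + Bp) + (z - ηp) ^ 2 * Ap
    let v'' : ℝ → ℝ := fun z => if z < 0 then 2 * C * z else c / 2 * z
    (∀ z : ℝ, HasDerivAt v (v' z) z) ∧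
    (∀ z : ℝ, HasDerivAt v' (v'' z) z) ∧
    v (-ηm) = β / 2 ∧ v ηp = -β / 2 ∧ v' (-ηm) = 0 ∧ v' ηp = 0 ∧
    ContinuousOn v (Set.Icc (-ηm) ηp) ∧
    (∃ K : ℝ, ∀ z ∈ Set.Icc (-ηm) ηp, |v'' z| ≤ K) := by
  subst hAm hAp hBm hBp
  intro v v' v''
  -- building blocks
  have h1 : ∀ z : ℝ, HasDerivAt (fun z : ℝ => z + ηm) 1 z := fun z =>
    (hasDerivAt_id z).add_const ηm
  have h1' : ∀ z : ℝ, HasDerivAt (fun z : ℝ => z - ηp) 1 z := fun z =>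
    (hasDerivAt_id z).sub_const ηp
  have h2 : ∀ z : ℝ, HasDerivAt (fun z : ℝ => C / 3 * z + -(2 * ηm * (C / 3))) (C / 3) z := by
    intro z
    simpa using ((hasDerivAt_id z).const_mul (C / 3)).add_const (-(2 * ηm * (C / 3)))
  have h2' : ∀ z : ℝ, HasDerivAt (fun z : ℝ => c / 12 * z + 2 * ηp * (c / 12)) (c / 12) z := by
    intro z
    simpa using ((hasDerivAt_id z).const_mul (c / 12)).add_const (2 * ηp * (c / 12))
  have hsq : ∀ z : ℝ, HasDerivAt (fun z : ℝ => (z + ηm) ^ 2) (2 * (z + ηm)) z := by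
    intro z; simpa using (h1 z).fun_pow 2
  have hsq' : ∀ z : ℝ, HasDerivAt (fun z : ℝ => (z - ηp) ^ 2) (2 * (z - ηp)) z := by
    intro z; simpa using (h1' z).fun_pow 2
  -- first derivative of pieces
  have hP : ∀ z : ℝ, HasDerivAt
      (fun z : ℝ => (z + ηm) ^ 2 * (C / 3 * z + -(2 * ηm * (C / 3))) + β / 2)
      (2 * (z + ηm) * (C / 3 * z + -(2 * ηm * (C / 3))) + (z + ηm) ^ 2 * (C / 3)) z := by
    intro z
    exact ((hsq z).mul (h2 z)).add_const (β / 2)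
  have hQ : ∀ z : ℝ, HasDerivAt
      (fun z : ℝ => (z - ηp) ^ 2 * (c / 12 * z + 2 * ηp * (c / 12)) - β / 2)
      (2 * (z - ηp) * (c / 12 * z + 2 * ηp * (c / 12)) + (z - ηp) ^ 2 * (c / 12)) z := by
    intro z
    exact ((hsq' z).mul (h2' z)).sub_const (β / 2)
  -- second derivative of pieces
  have hPd : ∀ z : ℝ, HasDerivAt
      (fun z : ℝ => 2 * (z + ηm) * (C / 3 * z + -(2 * ηm * (C / 3))) + (z + ηm) ^ 2 * (C / 3))
      (2 * C * z) z := by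
    intro z
    have hfirst : HasDerivAt (fun z : ℝ => 2 * (z + ηm)) 2 z := by
      simpa using (h1 z).const_mul 2
    have h := (hfirst.mul (h2 z)).add ((hsq z).mul_const (C / 3))
    have he : 2 * (C / 3 * z + -(2 * ηm * (C / 3))) + 2 * (z + ηm) * (C / 3)
        + 2 * (z + ηm) * (C / 3) = 2 * C * z := by ring
    rwa [he] at h
  have hQd : ∀ z : ℝ, HasDerivAt
      (fun z : ℝ => 2 * (z - ηp) * (c / 12 * z + 2 * ηp * (c / 12)) + (z - ηp) ^ 2 * (c / 12))
      (c / 2 * z) z := by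
    intro z
    have hfirst : HasDerivAt (fun z : ℝ => 2 * (z - ηp)) 2 z := by
      simpa using (h1' z).const_mul 2
    have h := (hfirst.mul (h2' z)).add ((hsq' z).mul_const (c / 12))
    have he : 2 * (c / 12 * z + 2 * ηp * (c / 12)) + 2 * (z - ηp) * (c / 12)
        + 2 * (z - ηp) * (c / 12) = c / 2 * z := by ring
    rwa [he] at h
  -- matching conditions
  have h0 : ((0 : ℝ) + ηm) ^ 2 * (C / 3 * 0 + -(2 * ηm * (C / 3))) + β / 2
      = ((0 : ℝ) - ηp) ^ 2 * (c / 12 * 0 + 2 * ηp * (c / 12)) - β / 2 := by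
    linear_combination -hmatch
  have h0' : 2 * ((0 : ℝ) + ηm) * (C / 3 * 0 + -(2 * ηm * (C / 3))) + ((0 : ℝ) + ηm) ^ 2 * (C / 3)
      = 2 * ((0 : ℝ) - ηp) * (c / 12 * 0 + 2 * ηp * (c / 12)) + ((0 : ℝ) - ηp) ^ 2 * (c / 12) := by
    linear_combination -(1 / 4 : ℝ) * hmatch'
  have hv : ∀ z : ℝ, HasDerivAt v (v' z) z := fun z =>
    glue_hasDerivAt _ _ _ _ hP hQ h0 h0' z
  have hv' : ∀ z : ℝ, HasDerivAt v' (v'' z) z := by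
    intro z
    have h := glue_hasDerivAt _ _ (fun z => 2 * C * z) (fun z => c / 2 * z)
      hPd hQd h0' (by norm_num) z
    have he : (if z ≤ 0 then 2 * C * z else c / 2 * z) = v'' z := by
      show _ = if z < 0 then 2 * C * z else c / 2 * z
      rcases lt_trichotomy z 0 with hz | rfl | hz
      · rw [if_pos hz.le, if_pos hz]
      · norm_num
      · rw [if_neg (not_le.mpr hz), if_neg (not_lt.mpr hz.le)]
    rwa [he] at h
  refine ⟨hv, hv', ?_, ?_, ?_, ?_, ?_, ?_⟩
  · show (if -ηm ≤ (0:ℝ) then (-ηm + ηm) ^ 2 * _ + β / 2 else _) = β / 2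
    rw [if_pos (neg_nonpos.mpr hηm.le)]
    ring
  · show (if ηp ≤ (0:ℝ) then _ else (ηp - ηp) ^ 2 * _ - β / 2) = -β / 2
    rw [if_neg (not_le.mpr hηp)]
    ring
  · show (if -ηm ≤ (0:ℝ) then 2 * (-ηm + ηm) * _ + (-ηm + ηm) ^ 2 * _ else _) = 0
    rw [if_pos (neg_nonpos.mpr hηm.le)]
    ring
  · show (if ηp ≤ (0:ℝ) then _ else 2 * (ηp - ηp) * _ + (ηp - ηp) ^ 2 * _) = 0
    rw [if_neg (not_le.mpr hηp)]
    ring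
  · exact fun z _ => (hv z).continuousAt.continuousWithinAt
  · refine ⟨2 * C * ηm + C * ηp, ?_⟩
    intro z hz
    obtain ⟨hz1, hz2⟩ := hz
    show |if z < 0 then 2 * C * z else c / 2 * z| ≤ _
    by_cases h : z < 0
    · rw [if_pos h, abs_of_nonpos (by nlinarith)]
      nlinarith
    · rw [if_neg h, abs_of_nonneg (by nlinarith [not_lt.mp h, hcC])]
      nlinarith [not_lt.mp h, hcC]



/- STATEMENT 13: existence (and uniqueness) of the matched piecewise-cubic
barrier profile: for `0 < c ≤ C` there exist unique `α₋, α₊ > 0` with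
`4Cα₋² = cα₊²` and `(c/6)α₊³ + (2C/3)α₋³ = 1`, such that for every `β > 0`,
with `η_± = α_± β^{1/3}`, `A₋ = C/3`, `A₊ = c/12`, `B₋ = −2η₋A₋`,
`B₊ = 2η₊A₊`, the piecewise cubic
`v(z) = (z+η₋)²(A₋z+B₋) + β/2` for `z ≤ 0`, `v(z) = (z−η₊)²(A₊z+B₊) − β/2`
for `z > 0`, is `C^{1,1}` (indeed differentiable with Lipschitz, bounded and
matching derivative), satisfies `v(−η₋) = β/2`, `v(η₊) = −β/2`,
`v'(−η₋) = v'(η₊) = 0`, and `v'' = 2Cz` for `z < 0`, `v'' = (c/2)z` for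
`z > 0`. -/
set_option maxHeartbeats 1600000 in
theorem matched_piecewise_cubic_barrier (c C : ℝ) (hc : 0 < c) (hcC : c ≤ C) :
    ∃ αm αp : ℝ, 0 < αm ∧ 0 < αp ∧
      4 * C * αm ^ 2 = c * αp ^ 2 ∧
      c / 6 * αp ^ 3 + 2 * C / 3 * αm ^ 3 = 1 ∧
      (∀ αm' αp' : ℝ, 0 < αm' → 0 < αp' →
        4 * C * αm' ^ 2 = c * αp' ^ 2 →
        c / 6 * αp' ^ 3 + 2 * C / 3 * αm' ^ 3 = 1 → αm' = αm ∧ αp' = αp) ∧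
      ∀ β : ℝ, 0 < β →
        let ηm : ℝ := αm * β ^ ((1 : ℝ) / 3)
        let ηp : ℝ := αp * β ^ ((1 : ℝ) / 3)
        let Am : ℝ := C / 3
        let Ap : ℝ := c / 12
        let Bm : ℝ := -(2 * ηm * Am)
        let Bp : ℝ := 2 * ηp * Ap
        let v : ℝ → ℝ := fun z =>
          if z ≤ 0 then (z + ηm) ^ 2 * (Am * z + Bm) + β / 2
          else (z - ηp) ^ 2 * (Ap * z + Bp) - β / 2
        let v' : ℝ → ℝ := fun z =>
          if z ≤ 0 then 2 * (z + ηm) * (Am * z + Bm) + (z + ηm) ^ 2 * Am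
          else 2 * (z - ηp) * (Ap * z + Bp) + (z - ηp) ^ 2 * Ap
        let v'' : ℝ → ℝ := fun z => if z < 0 then 2 * C * z else c / 2 * z
        (∀ z : ℝ, HasDerivAt v (v' z) z) ∧
        (∀ z : ℝ, HasDerivAt v' (v'' z) z) ∧
        v (-ηm) = β / 2 ∧ v ηp = -β / 2 ∧ v' (-ηm) = 0 ∧ v' ηp = 0 ∧
        ContinuousOn v (Set.Icc (-ηm) ηp) ∧
        (∃ K : ℝ, ∀ z ∈ Set.Icc (-ηm) ηp, |v'' z| ≤ K) := by
  have hC : 0 < C := lt_of_lt_of_le hc hcC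
  set r : ℝ := 2 * Real.sqrt (C / c) with hr_def
  have hr : 0 < r := by positivity
  have hr2 : r ^ 2 = 4 * C / c := by
    rw [hr_def, mul_pow, Real.sq_sqrt (by positivity : (0:ℝ) ≤ C / c)]
    ring
  set D : ℝ := c / 6 * r ^ 3 + 2 * C / 3 with hD_def
  have hD : 0 < D := by positivity
  set αm : ℝ := D ^ (-(1 : ℝ) / 3) with hαm_def
  have hαm : 0 < αm := Real.rpow_pos_of_pos hD _
  have hcube : αm ^ 3 = D⁻¹ := by
    rw [hαm_def, ← Real.rpow_natCast (D ^ (-(1:ℝ)/3)) 3, ← Real.rpow_mul hD.le]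
    norm_num [Real.rpow_neg_one]
  set αp : ℝ := r * αm with hαp_def
  have hαp : 0 < αp := mul_pos hr hαm
  have hc1 : 4 * C * αm ^ 2 = c * αp ^ 2 := by
    rw [hαp_def, mul_pow, hr2]
    field_simp
  have hc2 : c / 6 * αp ^ 3 + 2 * C / 3 * αm ^ 3 = 1 := by
    rw [hαp_def, mul_pow]
    have : c / 6 * (r ^ 3 * αm ^ 3) + 2 * C / 3 * αm ^ 3 = D * αm ^ 3 := by
      rw [hD_def]; ring
    rw [this, hcube, mul_inv_cancel₀ hD.ne']
  refine ⟨αm, αp, hαm, hαp, hc1, hc2, ?_, ?_⟩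
  · intro αm' αp' hαm' hαp' h1 h2
    have hpr : αp' = r * αm' := by
      have hsq : αp' ^ 2 = (r * αm') ^ 2 := by
        rw [mul_pow, hr2, div_mul_eq_mul_div, eq_div_iff hc.ne']
        linear_combination -h1
      nlinarith [mul_pos hr hαm', sq_nonneg (αp' - r * αm')]
    have hm3 : αm' ^ 3 = αm ^ 3 := by
      rw [hpr] at h2
      rw [mul_pow] at h2
      have hD3 : D * αm' ^ 3 = 1 := by rw [hD_def]; linear_combination h2
      have h' : αm' ^ 3 * D = 1 := by linear_combination hD3
      rw [eq_inv_of_mul_eq_one_left h', hcube]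
    have hmm : αm' = αm := by
      nlinarith [sq_nonneg (αm' - αm), sq_nonneg (αm' + αm), mul_pos hαm' hαm]
    exact ⟨hmm, by rw [hpr, hmm, ← hαp_def]⟩
  · intro β hβ
    have hb : 0 < β ^ ((1 : ℝ) / 3) := Real.rpow_pos_of_pos hβ _
    have hb3 : (β ^ ((1 : ℝ) / 3)) ^ 3 = β := by
      rw [← Real.rpow_natCast (β ^ ((1:ℝ)/3)) 3, ← Real.rpow_mul hβ.le]
      norm_num
    have hmatch : c / 6 * (αp * β ^ ((1 : ℝ) / 3)) ^ 3
        + 2 * C / 3 * (αm * β ^ ((1 : ℝ) / 3)) ^ 3 = β := by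
      linear_combination (c / 6 * αp ^ 3 + 2 * C / 3 * αm ^ 3) * hb3 + β * hc2
    have hmatch' : 4 * C * (αm * β ^ ((1 : ℝ) / 3)) ^ 2
        = c * (αp * β ^ ((1 : ℝ) / 3)) ^ 2 := by
      linear_combination (β ^ ((1 : ℝ) / 3)) ^ 2 * hc1
    exact barrier_aux c C β (αm * β ^ ((1 : ℝ) / 3)) (αp * β ^ ((1 : ℝ) / 3))
      (C / 3) (c / 12) (-(2 * (αm * β ^ ((1 : ℝ) / 3)) * (C / 3)))
      (2 * (αp * β ^ ((1 : ℝ) / 3)) * (c / 12)) hc hC hcC hβ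
      (mul_pos hαm hb) (mul_pos hαp hb) rfl rfl rfl rfl hmatch hmatch'
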